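/- Let Υ > 0, f ∈ L²([0,T];H), g ∈ S^Υ, and let r : [0,T] → V be measurable with sup_{t∈[0,T]} ‖r(t)‖_H < ∞. Then the map t ↦ B(t,r(t))f(t) belongs to L¹([0,T];H) and the map t ↦ ∫_Z γ(t,r(t),z)(g(t,z) − 1) ν(dz) belongs to L¹([0,T];H). -/

import Mathlib

open MeasureTheory Filter Topology
open scoped ENNReal


lemma ell_nonneg {y : ℝ} (hy : 0 ≤ y) : 0 ≤ y * Real.log y - y + 1 := by
  rcases eq_or_lt_of_le hy with h | h
  · simp [← h]
  · have h1 : Real.log (1/y) ≤ 1/y - 1 := Real.log_le_sub_one_of_pos (by positivity)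
    rw [Real.log_div one_ne_zero h.ne', Real.log_one] at h1
    have h2 : y - 1 ≤ y * Real.log y := by
      nlinarith [mul_le_mul_of_nonneg_left h1 (le_of_lt h), mul_one_div y y, div_self h.ne']
    linarith

-- on [0,1] : (y-1)^2/2 ≤ ℓ(y)
lemma ell_ge_left {y : ℝ} (h0 : 0 ≤ y) (h1 : y ≤ 1) :
    (y - 1)^2 / 2 ≤ y * Real.log y - y + 1 := by
  set F : ℝ → ℝ := fun x => x * Real.log x - x + 1 - (x-1)^2/2 with hF
  have hcont : ContinuousOn F (Set.Icc 0 1) := by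
    apply Continuous.continuousOn
    exact ((Real.continuous_mul_log.sub continuous_id).add continuous_const).sub
      (((continuous_id.sub continuous_const).pow 2).div_const 2)
  have hderiv : ∀ x ∈ Set.Ioo (0:ℝ) 1, HasDerivAt F (Real.log x - (x - 1)) x := by
    intro x hx
    have h1 : HasDerivAt (fun x : ℝ => x * Real.log x) (Real.log x + 1) x :=
      Real.hasDerivAt_mul_log hx.1.ne'
    have h2 : HasDerivAt (fun x : ℝ => (x-1)^2/2) (x - 1) x := by
      have : HasDerivAt (fun x : ℝ => (x-1)^2) (2*(x-1)^1 * 1) x :=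
        ((hasDerivAt_id x).sub_const 1).pow 2
      simpa using this.div_const 2
    have := ((h1.sub (hasDerivAt_id x)).add_const 1).sub h2
    exact this.congr_deriv (by ring)
  have hanti : AntitoneOn F (Set.Icc 0 1) := by
    apply antitoneOn_of_deriv_nonpos (convex_Icc 0 1) hcont
    · intro x hx
      rw [interior_Icc] at hx
      exact (hderiv x hx).differentiableAt.differentiableWithinAt
    · intro x hx
      rw [interior_Icc] at hx
      rw [(hderiv x hx).deriv]
      have := Real.log_le_sub_one_of_pos hx.1
      linarith
  have := hanti (Set.mem_Icc.2 ⟨h0, h1⟩) (Set.mem_Icc.2 ⟨zero_le_one, le_refl 1⟩) h1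
  simp [hF] at this ⊢
  linarith

-- log x ≥ (x-1)/2 on [1,2]
lemma log_ge_half {x : ℝ} (h1 : 1 ≤ x) (h2 : x ≤ 2) : (x - 1)/2 ≤ Real.log x := by
  set F : ℝ → ℝ := fun x => Real.log x - (x-1)/2 with hF
  have hderiv : ∀ y ∈ Set.Ioo (1:ℝ) 2, HasDerivAt F (1/y - 1/2) y := by
    intro y hy
    have h1 : HasDerivAt Real.log (1/y) y := by
      simpa [one_div] using Real.hasDerivAt_log (by linarith [hy.1] : y ≠ 0)
    exact h1.sub (((hasDerivAt_id y).sub_const 1).div_const 2)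
  have hmono : MonotoneOn F (Set.Icc 1 2) := by
    apply monotoneOn_of_deriv_nonneg (convex_Icc 1 2)
    · apply ContinuousOn.sub
      · exact Real.continuousOn_log.mono (by intro y hy; simp at hy ⊢; intro h; linarith [hy.1])
      · exact (continuous_id.sub continuous_const).continuousOn.div_const 2
    · intro y hy; rw [interior_Icc] at hy
      exact (hderiv y hy).differentiableAt.differentiableWithinAt
    · intro y hy; rw [interior_Icc] at hy
      rw [(hderiv y hy).deriv]
      have := hy.2
      have hy1 := hy.1
      rw [sub_nonneg, div_le_div_iff₀ (by norm_num) (by linarith)]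
      linarith
  have := hmono (Set.mem_Icc.2 ⟨le_refl 1, by norm_num⟩) (Set.mem_Icc.2 ⟨h1, h2⟩) h1
  simp [hF] at this
  linarith

-- on [1,2] : (y-1)^2/4 ≤ ℓ(y)
lemma ell_ge_right {y : ℝ} (h1 : 1 ≤ y) (h2 : y ≤ 2) :
    (y - 1)^2 / 4 ≤ y * Real.log y - y + 1 := by
  set F : ℝ → ℝ := fun x => x * Real.log x - x + 1 - (x-1)^2/4 with hF
  have hderiv : ∀ x ∈ Set.Ioo (1:ℝ) 2, HasDerivAt F (Real.log x - (x - 1)/2) x := by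
    intro x hx
    have ha : HasDerivAt (fun x : ℝ => x * Real.log x) (Real.log x + 1) x :=
      Real.hasDerivAt_mul_log (by linarith [hx.1] : x ≠ 0)
    have hb : HasDerivAt (fun x : ℝ => (x-1)^2/4) (2*(x-1)^1*1/4) x :=
      (((hasDerivAt_id x).sub_const 1).pow 2).div_const 4
    have := ((ha.sub (hasDerivAt_id x)).add_const 1).sub hb
    exact this.congr_deriv (by ring)
  have hmono : MonotoneOn F (Set.Icc 1 2) := by
    apply monotoneOn_of_deriv_nonneg (convex_Icc 1 2)
    · apply Continuous.continuousOn
      exact ((Real.continuous_mul_log.sub continuous_id).add continuous_const).sub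
        ((((continuous_id.sub continuous_const).pow 2)).div_const 4)
    · intro x hx; rw [interior_Icc] at hx
      exact (hderiv x hx).differentiableAt.differentiableWithinAt
    · intro x hx; rw [interior_Icc] at hx
      rw [(hderiv x hx).deriv]
      have := log_ge_half hx.1.le hx.2.le
      linarith
  have := hmono (Set.mem_Icc.2 ⟨le_refl 1, by norm_num⟩) (Set.mem_Icc.2 ⟨h1, h2⟩) h1
  simp [hF] at this
  linarith

-- combined : on [0,2], (y-1)^2 ≤ 4 ℓ(y)
lemma sq_le_four_ell {y : ℝ} (h0 : 0 ≤ y) (h2 : y ≤ 2) :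
    (y - 1)^2 ≤ 4 * (y * Real.log y - y + 1) := by
  rcases le_total y 1 with h | h
  · have := ell_ge_left h0 h
    have := ell_nonneg h0
    linarith
  · have := ell_ge_right h h2; linarith

-- ℓ monotone on [1, ∞): for y ≥ 2, ℓ(y) ≥ 2 log 2 - 1
lemma ell_ge_of_two_le {y : ℝ} (h : 2 ≤ y) :
    2 * Real.log 2 - 1 ≤ y * Real.log y - y + 1 := by
  set F : ℝ → ℝ := fun x => x * Real.log x - x + 1 with hF
  have hmono : MonotoneOn F (Set.Ici 1) := by
    apply monotoneOn_of_deriv_nonneg (convex_Ici 1)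
    · apply Continuous.continuousOn
      exact (Real.continuous_mul_log.sub continuous_id).add continuous_const
    · intro x hx; rw [interior_Ici] at hx; simp only [Set.mem_Ioi] at hx
      have ha : HasDerivAt F (Real.log x) x := by
        have := ((Real.hasDerivAt_mul_log (by intro hc; rw [hc] at hx; linarith : x ≠ 0)).sub
          (hasDerivAt_id x)).add_const 1
        exact this.congr_deriv (by ring)
      exact ha.differentiableAt.differentiableWithinAt
    · intro x hx; rw [interior_Ici] at hx; simp only [Set.mem_Ioi] at hx
      have ha : HasDerivAt F (Real.log x) x := by
        have := ((Real.hasDerivAt_mul_log (by intro hc; rw [hc] at hx; linarith : x ≠ 0)).sub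
          (hasDerivAt_id x)).add_const 1
        exact this.congr_deriv (by ring)
      rw [ha.deriv]
      exact Real.log_nonneg (by linarith)
  have := hmono (Set.mem_Ici.2 one_le_two) (Set.mem_Ici.2 (by linarith)) h
  simp [hF] at this
  linarith

lemma two_log_two_pos : 0 < 2 * Real.log 2 - 1 := by
  nlinarith [Real.log_two_gt_d9]

-- Young's inequality for ℓ and exp
lemma young_ell {a : ℝ} (ha : 0 ≤ a) (b : ℝ) :
    a * b ≤ (a * Real.log a - a + 1) + (Real.exp b - 1) := by
  rcases eq_or_lt_of_le ha with h | h
  · simp [← h]; positivity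
  · have key := Real.add_one_le_exp (b - Real.log a)
    have he : Real.exp (b - Real.log a) = Real.exp b / a := by
      rw [Real.exp_sub, Real.exp_log h]
    rw [he] at key
    have := mul_le_mul_of_nonneg_left key h.le
    rw [mul_div_cancel₀ _ h.ne'] at this
    nlinarith

lemma key_lintegral {X : Type*} [MeasurableSpace X] (μ : Measure X) (Υ δ : ℝ)
    (hδ : 0 < δ) (g L : X → ℝ)
    (hgm : Measurable g) (hg0 : ∀ x, 0 ≤ g x)
    (hgΥ : ∫⁻ x, ENNReal.ofReal (g x * Real.log (g x) - g x + 1) ∂μ ≤ ENNReal.ofReal Υ)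
    (hLm : Measurable L) (hL0 : ∀ x, 0 ≤ L x)
    (hL2 : ∫⁻ x, ENNReal.ofReal (L x ^ 2) ∂μ < ∞)
    (hexp : ∀ E : Set X, MeasurableSet E → μ E < ∞ →
      ∫⁻ x in E, ENNReal.ofReal (Real.exp (δ * L x ^ 2)) ∂μ < ∞) :
    ∫⁻ x, ENNReal.ofReal (|g x - 1| * L x) ∂μ < ∞ := by
  set ℓg : X → ℝ := fun x => g x * Real.log (g x) - g x + 1 with hℓg
  have hℓg0 : ∀ x, 0 ≤ ℓg x := fun x => ell_nonneg (hg0 x)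
  have hℓgm : Measurable ℓg :=
    ((hgm.mul (Real.measurable_log.comp hgm)).sub hgm).add_const 1
  have hℓgm' : Measurable fun x => ENNReal.ofReal (ℓg x) := hℓgm.ennreal_ofReal
  have hL2m : Measurable fun x => ENNReal.ofReal (L x ^ 2) := (hLm.pow_const 2).ennreal_ofReal
  have hℓgint : ∫⁻ x, ENNReal.ofReal (ℓg x) ∂μ < ∞ :=
    lt_of_le_of_lt hgΥ ENNReal.ofReal_lt_top
  -- the exceptional set
  set E : Set X := {x | 2 < g x} ∪ {x | 1 < L x} with hE
  have hEm : MeasurableSet E :=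
    (measurableSet_lt measurable_const hgm).union (measurableSet_lt measurable_const hLm)
  have hEfin : μ E < ∞ := by
    have hc : (0:ℝ) < 2 * Real.log 2 - 1 := two_log_two_pos
    have h1 : μ {x | 2 < g x} < ∞ := by
      have hsub : {x | 2 < g x} ⊆
          {x | ENNReal.ofReal (2 * Real.log 2 - 1) ≤ ENNReal.ofReal (ℓg x)} := by
        intro x hx
        exact ENNReal.ofReal_le_ofReal (ell_ge_of_two_le (le_of_lt hx))
      have hmk := mul_meas_ge_le_lintegral₀ (μ := μ) hℓgm'.aemeasurable
        (ENNReal.ofReal (2 * Real.log 2 - 1))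
      have hle : ENNReal.ofReal (2 * Real.log 2 - 1) * μ {x | 2 < g x} ≤ ENNReal.ofReal Υ :=
        le_trans (le_trans (mul_le_mul_right (measure_mono hsub) _) hmk) hgΥ
      have hne : ENNReal.ofReal (2 * Real.log 2 - 1) ≠ 0 := (ENNReal.ofReal_pos.2 hc).ne'
      have hdiv : μ {x | 2 < g x} ≤ ENNReal.ofReal Υ / ENNReal.ofReal (2 * Real.log 2 - 1) :=
        (ENNReal.le_div_iff_mul_le (Or.inl hne) (Or.inl ENNReal.ofReal_ne_top)).2
          (by rw [mul_comm]; exact hle)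
      exact lt_of_le_of_lt hdiv (ENNReal.div_lt_top ENNReal.ofReal_ne_top hne)
    have h2 : μ {x | 1 < L x} < ∞ := by
      have hsub : {x | 1 < L x} ⊆ {x | (1:ℝ≥0∞) ≤ ENNReal.ofReal (L x ^ 2)} := by
        intro x hx
        simp only [Set.mem_setOf_eq] at hx ⊢
        rw [show (1:ℝ≥0∞) = ENNReal.ofReal 1 by simp]
        exact ENNReal.ofReal_le_ofReal (by nlinarith)
      have hmk := mul_meas_ge_le_lintegral₀ (μ := μ) hL2m.aemeasurable 1
      rw [one_mul] at hmk
      exact lt_of_le_of_lt (le_trans (measure_mono hsub) hmk) hL2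
    exact lt_of_le_of_lt (measure_union_le _ _) (ENNReal.add_lt_top.2 ⟨h1, h2⟩)
  -- split the integral
  rw [← lintegral_add_compl (fun x => ENNReal.ofReal (|g x - 1| * L x)) hEm]
  refine ENNReal.add_lt_top.2 ⟨?_, ?_⟩
  · -- on E : |g-1| L ≤ δ⁻¹ ℓg + δ⁻¹ exp(δ + δ L²) + 1 + L²
    have hptR : ∀ x, |g x - 1| * L x ≤
        δ⁻¹ * ℓg x + (δ⁻¹ * Real.exp (δ + δ * L x ^ 2) + (1 + L x ^ 2)) := by
      intro x
      have hy := young_ell (hg0 x) (δ * L x)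
      have hLx := hL0 x
      have hgx := hg0 x
      have h1 : |g x - 1| * L x ≤ g x * L x + L x := by
        have habs : |g x - 1| ≤ g x + 1 := by rw [abs_le]; constructor <;> nlinarith
        nlinarith
      have h2 : g x * L x ≤ δ⁻¹ * ℓg x + δ⁻¹ * Real.exp (δ * L x) := by
        have h0 : g x * (δ * L x) ≤ ℓg x + (Real.exp (δ * L x) - 1) := hy
        have hexp1 : (0:ℝ) < Real.exp (δ * L x) := Real.exp_pos _
        have := mul_le_mul_of_nonneg_left h0 (by positivity : (0:ℝ) ≤ δ⁻¹)
        have hδi : δ⁻¹ * δ = 1 := inv_mul_cancel₀ hδ.ne'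
        nlinarith [hℓg0 x]
      have h3 : Real.exp (δ * L x) ≤ Real.exp (δ + δ * L x ^ 2) := by
        apply Real.exp_le_exp.2
        have hq : L x ≤ 1 + L x ^ 2 := by nlinarith [sq_nonneg (L x - 1)]
        nlinarith
      have h5 : δ⁻¹ * Real.exp (δ * L x) ≤ δ⁻¹ * Real.exp (δ + δ * L x ^ 2) :=
        mul_le_mul_of_nonneg_left h3 (by positivity)
      have h4 : L x ≤ 1 + L x ^ 2 := by nlinarith [sq_nonneg (L x - 1)]
      linarith
    have hm1 : Measurable fun x => ENNReal.ofReal (δ⁻¹ * ℓg x) :=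
      (hℓgm.const_mul _).ennreal_ofReal
    have hm2 : Measurable fun x => ENNReal.ofReal (δ⁻¹ * Real.exp (δ + δ * L x ^ 2)) :=
      ((((hLm.pow_const 2).const_mul δ).const_add δ).exp.const_mul _).ennreal_ofReal
    calc ∫⁻ x in E, ENNReal.ofReal (|g x - 1| * L x) ∂μ
        ≤ ∫⁻ x in E, (ENNReal.ofReal (δ⁻¹ * ℓg x) +
            (ENNReal.ofReal (δ⁻¹ * Real.exp (δ + δ * L x ^ 2)) +
              ((1:ℝ≥0∞) + ENNReal.ofReal (L x ^ 2)))) ∂μ := by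
          apply setLIntegral_mono (hm1.add (hm2.add (measurable_const.add hL2m)))
          intro x _
          calc ENNReal.ofReal (|g x - 1| * L x)
              ≤ ENNReal.ofReal (δ⁻¹ * ℓg x +
                  (δ⁻¹ * Real.exp (δ + δ * L x ^ 2) + (1 + L x ^ 2))) :=
                ENNReal.ofReal_le_ofReal (hptR x)
            _ = _ := by
                rw [ENNReal.ofReal_add (mul_nonneg (by positivity) (hℓg0 x)) (by positivity),
                  ENNReal.ofReal_add (by positivity) (by positivity),
                  ENNReal.ofReal_add (by norm_num) (by positivity), ENNReal.ofReal_one]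
                rfl
      _ = (∫⁻ x in E, ENNReal.ofReal (δ⁻¹ * ℓg x) ∂μ) +
            ((∫⁻ x in E, ENNReal.ofReal (δ⁻¹ * Real.exp (δ + δ * L x ^ 2)) ∂μ) +
              ((∫⁻ _ in E, (1:ℝ≥0∞) ∂μ) + ∫⁻ x in E, ENNReal.ofReal (L x ^ 2) ∂μ)) := by
          rw [lintegral_add_left hm1, lintegral_add_left hm2, lintegral_add_left measurable_const]
      _ < ∞ := by
          refine ENNReal.add_lt_top.2 ⟨?_, ENNReal.add_lt_top.2 ⟨?_, ENNReal.add_lt_top.2 ⟨?_, ?_⟩⟩⟩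
          · have heq : ∀ x, ENNReal.ofReal (δ⁻¹ * ℓg x) =
                ENNReal.ofReal δ⁻¹ * ENNReal.ofReal (ℓg x) :=
              fun x => ENNReal.ofReal_mul (by positivity)
            simp_rw [heq]
            rw [lintegral_const_mul' _ _ ENNReal.ofReal_ne_top]
            exact ENNReal.mul_lt_top ENNReal.ofReal_lt_top
              (lt_of_le_of_lt (setLIntegral_le_lintegral _ _) hℓgint)
          · have heq : ∀ x, ENNReal.ofReal (δ⁻¹ * Real.exp (δ + δ * L x ^ 2)) =
                ENNReal.ofReal (δ⁻¹ * Real.exp δ) * ENNReal.ofReal (Real.exp (δ * L x ^ 2)) := by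
              intro x
              rw [← ENNReal.ofReal_mul (by positivity), Real.exp_add]
              ring_nf
            simp_rw [heq]
            rw [lintegral_const_mul' _ _ ENNReal.ofReal_ne_top]
            exact ENNReal.mul_lt_top ENNReal.ofReal_lt_top (hexp E hEm hEfin)
          · simpa using hEfin
          · exact lt_of_le_of_lt (setLIntegral_le_lintegral _ _) hL2
  · -- on Eᶜ : g ≤ 2, L ≤ 1, use quadratic bound
    have hpt : ∀ x ∈ Eᶜ, ENNReal.ofReal (|g x - 1| * L x) ≤
        ENNReal.ofReal (2 * ℓg x) + ENNReal.ofReal (L x ^ 2) := by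
      intro x hx
      simp only [hE, Set.compl_union, Set.mem_inter_iff, Set.mem_compl_iff, Set.mem_setOf_eq,
        not_lt] at hx
      obtain ⟨hg2, hL1⟩ := hx
      rw [← ENNReal.ofReal_add (mul_nonneg (by norm_num) (hℓg0 x)) (by positivity)]
      apply ENNReal.ofReal_le_ofReal
      have hq : (g x - 1)^2 ≤ 4 * ℓg x := sq_le_four_ell (hg0 x) hg2
      have hLx := hL0 x
      have habs : |g x - 1| * L x ≤ ((g x - 1)^2 + L x ^ 2) / 2 := by
        nlinarith [sq_abs (g x - 1), sq_nonneg (|g x - 1| - L x)]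
      nlinarith
    calc ∫⁻ x in Eᶜ, ENNReal.ofReal (|g x - 1| * L x) ∂μ
        ≤ ∫⁻ x in Eᶜ, (ENNReal.ofReal (2 * ℓg x) + ENNReal.ofReal (L x ^ 2)) ∂μ :=
          setLIntegral_mono ((hℓgm.const_mul 2).ennreal_ofReal.add hL2m) hpt
      _ < ∞ := by
          rw [lintegral_add_left ((hℓgm.const_mul 2).ennreal_ofReal)]
          refine ENNReal.add_lt_top.2 ⟨?_, lt_of_le_of_lt (setLIntegral_le_lintegral _ _) hL2⟩
          have heq : ∀ x, ENNReal.ofReal (2 * ℓg x) = 2 * ENNReal.ofReal (ℓg x) := by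
            intro x
            rw [ENNReal.ofReal_mul (by norm_num)]
            norm_num
          simp_rw [heq]
          rw [lintegral_const_mul' _ _ (by norm_num)]
          exact ENNReal.mul_lt_top (by norm_num)
            (lt_of_le_of_lt (setLIntegral_le_lintegral _ _) hℓgint)

/-- The measure `λ_T ⊗ ν` on `Z_T = [0,T] × Z`. -/
noncomputable def nuT {Z : Type*} [MeasurableSpace Z] (T : ℝ) (ν : Measure Z) :
    Measure (ℝ × Z) := (volume.restrict (Set.Icc 0 T)).prod ν

/-- The set `S^Υ` of nonnegative measurable functions `g` on `(Z_T, ν_T)` with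
`∫ ℓ(g) dν_T ≤ Υ`, where `ℓ(r) = r log r − r + 1`. -/
def entS {X : Type*} [MeasurableSpace X] (μ : Measure X) (Υ : ℝ) : Set (X → ℝ) :=
  {g | Measurable g ∧ (∀ x, 0 ≤ g x) ∧
    ∫⁻ x, ENNReal.ofReal (g x * Real.log (g x) - g x + 1) ∂μ ≤ ENNReal.ofReal Υ}

/-- The class `𝓗_p` on `(Z_T, ν_T)`. -/
def memHp {X : Type*} [MeasurableSpace X] (μ : Measure X) (p : ℝ) (h : X → ℝ) : Prop :=
  Measurable h ∧ (∀ x, 0 ≤ h x) ∧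
    ∃ δ > (0:ℝ), ∀ E : Set X, MeasurableSet E → μ E < ∞ →
      ∫⁻ x in E, ENNReal.ofReal (Real.exp (δ * h x ^ p)) ∂μ < ∞

/-- if `sup_{t∈[0,T]} ‖r(t)‖_H < ∞`, `f ∈ L²([0,T];H)` and `g ∈ S^Υ`, then
`t ↦ B(t,r(t))f(t)` and `t ↦ ∫_Z γ(t,r(t),z)(g(t,z) − 1) ν(dz)` belong to `L¹([0,T];H)`. -/
theorem statement6 {V H Z : Type*}
    [NormedAddCommGroup V] [NormedSpace ℝ V] [MeasurableSpace V] [BorelSpace V]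
    [NormedAddCommGroup H] [InnerProductSpace ℝ H] [CompleteSpace H]
    [TopologicalSpace Z] [PolishSpace Z] [LocallyCompactSpace Z]
    [MeasurableSpace Z] [BorelSpace Z]
    -- the continuous dense embedding `V ⊂ H`
    (i : V →L[ℝ] H) (hi_inj : Function.Injective i) (hi_dense : DenseRange i)
    (T : ℝ) (hT : 0 < T)
    (ν : Measure Z) [IsFiniteMeasureOnCompacts ν]
    (b : ℝ → ℝ) (hb0 : ∀ t, 0 ≤ b t) (hb : IntegrableOn b (Set.Icc 0 T))
    (B : ℝ → V → (H →L[ℝ] H))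
    (hB_meas : StronglyMeasurable (Function.uncurry B))
    -- operator-norm bound on `B` (implied by (H.5))
    (hB : ∀ᵐ t ∂(volume.restrict (Set.Icc (0:ℝ) T)), ∀ x : V,
      ‖B t x‖ ≤ Real.sqrt (b t * (1 + ‖i x‖ ^ 2)))
    (γ : ℝ → V → Z → H)
    (hγ_meas : StronglyMeasurable (fun q : ℝ × V × Z => γ q.1 q.2.1 q.2.2))
    (Lγ : ℝ × Z → ℝ)
    (hLγ_L2 : ∫⁻ q, ENNReal.ofReal (Lγ q ^ 2) ∂(nuT T ν) < ∞)
    (hLγ_H2 : memHp (nuT T ν) 2 Lγ)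
    -- growth bound on `γ` (hypothesis (H.8))
    (hγ : ∀ᵐ t ∂(volume.restrict (Set.Icc (0:ℝ) T)), ∀ (x : V) (z : Z),
      ‖γ t x z‖ ≤ Lγ (t, z) * (1 + ‖i x‖))
    (Υ : ℝ) (hΥ : 0 < Υ)
    (f : ℝ → H) (hf : MemLp f 2 (volume.restrict (Set.Icc (0:ℝ) T)))
    (g : ℝ × Z → ℝ) (hg : g ∈ entS (nuT T ν) Υ)
    (r : ℝ → V) (hr_meas : Measurable r)
    (hr_bdd : ∃ M : ℝ, ∀ t ∈ Set.Icc (0:ℝ) T, ‖i (r t)‖ ≤ M) :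
    Integrable (fun t => (B t (r t)) (f t)) (volume.restrict (Set.Icc (0:ℝ) T)) ∧
    Integrable (fun t => ∫ z, (g (t, z) - 1) • γ t (r t) z ∂ν)
      (volume.restrict (Set.Icc (0:ℝ) T)) := by
  obtain ⟨M, hM⟩ := hr_bdd
  set μT := volume.restrict (Set.Icc (0:ℝ) T) with hμT
  obtain ⟨hLγm, hLγ0, δ, hδ, hLexp⟩ := hLγ_H2
  obtain ⟨hgm, hg0, hgΥ⟩ := hg
  have htmem : ∀ᵐ t ∂μT, t ∈ Set.Icc (0:ℝ) T := ae_restrict_mem measurableSet_Icc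
  constructor
  · -- Part 1 : t ↦ B(t, r(t)) f(t)
    have hφ : StronglyMeasurable fun t => B t (r t) :=
      hB_meas.comp_measurable (measurable_id.prodMk hr_meas)
    have hmeas : AEStronglyMeasurable (fun t => (B t (r t)) (f t)) μT := by
      have hc : Continuous fun p : (H →L[ℝ] H) × H => p.1 p.2 :=
        isBoundedBilinearMap_apply.continuous
      exact hc.comp_aestronglyMeasurable (hφ.aestronglyMeasurable.prodMk hf.1)
    have hdom : Integrable (fun t => (b t * (1 + M^2) + ‖f t‖^2) / 2) μT :=
      ((hb.mul_const _).add hf.norm.integrable_sq).div_const 2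
    apply Integrable.mono' hdom hmeas
    filter_upwards [hB, htmem] with t hBt ht
    have hM' := hM t ht
    have h1 : ‖(B t (r t)) (f t)‖ ≤ ‖B t (r t)‖ * ‖f t‖ := (B t (r t)).le_opNorm (f t)
    have h2 : ‖B t (r t)‖ ≤ Real.sqrt (b t * (1 + ‖i (r t)‖^2)) := hBt (r t)
    have hnn : (0:ℝ) ≤ ‖i (r t)‖ := norm_nonneg _
    have h3 : b t * (1 + ‖i (r t)‖^2) ≤ b t * (1 + M^2) :=
      mul_le_mul_of_nonneg_left (by nlinarith) (hb0 t)
    have h4 : Real.sqrt (b t * (1 + ‖i (r t)‖^2)) ≤ Real.sqrt (b t * (1 + M^2)) :=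
      Real.sqrt_le_sqrt h3
    have h5 : ‖B t (r t)‖ * ‖f t‖ ≤ Real.sqrt (b t * (1 + M^2)) * ‖f t‖ :=
      mul_le_mul_of_nonneg_right (h2.trans h4) (norm_nonneg _)
    have hbM : (0:ℝ) ≤ b t * (1 + M^2) := by nlinarith [hb0 t]
    have hsq : Real.sqrt (b t * (1 + M^2)) ^ 2 = b t * (1 + M^2) := Real.sq_sqrt hbM
    nlinarith [sq_nonneg (Real.sqrt (b t * (1 + M^2)) - ‖f t‖),
      Real.sqrt_nonneg (b t * (1 + M^2)), norm_nonneg (f t)]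
  · -- Part 2
    have hK : ∫⁻ q, ENNReal.ofReal (|g q - 1| * Lγ q) ∂(nuT T ν) < ∞ := by
      apply key_lintegral (nuT T ν) Υ δ hδ g Lγ hgm hg0 hgΥ hLγm hLγ0 hLγ_L2
      intro E hEmeas hEfin
      have h := hLexp E hEmeas hEfin
      have hconv : ∀ x : ℝ, x ^ (2:ℝ) = x ^ (2:ℕ) := fun x => by
        rw [show (2:ℝ) = ((2:ℕ):ℝ) by norm_num, Real.rpow_natCast]
      simp_rw [hconv] at h
      exact h
    set G : ℝ × Z → H := fun q => (g q - 1) • γ q.1 (r q.1) q.2 with hG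
    have hGm : AEStronglyMeasurable G (nuT T ν) := by
      have hγc : StronglyMeasurable fun q : ℝ × Z => γ q.1 (r q.1) q.2 :=
        hγ_meas.comp_measurable (measurable_fst.prodMk
          ((hr_meas.comp measurable_fst).prodMk measurable_snd))
      exact ((hgm.sub measurable_const).aestronglyMeasurable).smul hγc.aestronglyMeasurable
    have hprod : ∀ᵐ q ∂(nuT T ν),
        (∀ (x : V) (z : Z), ‖γ q.1 x z‖ ≤ Lγ (q.1, z) * (1 + ‖i x‖)) ∧
          q.1 ∈ Set.Icc (0:ℝ) T := by
      have hP : ∀ᵐ t ∂μT, (∀ (x : V) (z : Z), ‖γ t x z‖ ≤ Lγ (t, z) * (1 + ‖i x‖)) ∧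
          t ∈ Set.Icc (0:ℝ) T := hγ.and htmem
      rw [ae_iff] at hP ⊢
      set S : Set ℝ := {t : ℝ | ¬ ((∀ (x : V) (z : Z), ‖γ t x z‖ ≤ Lγ (t, z) * (1 + ‖i x‖)) ∧
        t ∈ Set.Icc (0:ℝ) T)} with hSdef
      have hnull : (nuT T ν) (S ×ˢ (Set.univ : Set Z)) = 0 := by
        rw [show nuT T ν = μT.prod ν from rfl, Measure.prod_prod, hP, zero_mul]
      exact measure_mono_null (fun q hq => Set.mem_prod.2 ⟨hq, Set.mem_univ q.2⟩) hnull
    have hGint : Integrable G (nuT T ν) := by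
      refine ⟨hGm, ?_⟩
      rw [hasFiniteIntegral_iff_norm]
      calc ∫⁻ q, ENNReal.ofReal ‖G q‖ ∂(nuT T ν)
          ≤ ∫⁻ q, ENNReal.ofReal ((1 + max M 0) * (|g q - 1| * Lγ q)) ∂(nuT T ν) := by
            apply lintegral_mono_ae
            filter_upwards [hprod] with q hq
            obtain ⟨hq1, hq2⟩ := hq
            apply ENNReal.ofReal_le_ofReal
            have hγb := hq1 (r q.1) q.2
            have hMq : ‖i (r q.1)‖ ≤ M := hM q.1 hq2
            have hLnn : 0 ≤ Lγ (q.1, q.2) := hLγ0 (q.1, q.2)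
            have heq : ‖G q‖ = |g q - 1| * ‖γ q.1 (r q.1) q.2‖ := by
              rw [hG]; simp [norm_smul, Real.norm_eq_abs]
            rw [heq]
            have hstep : |g q - 1| * ‖γ q.1 (r q.1) q.2‖ ≤
                |g q - 1| * (Lγ (q.1, q.2) * (1 + ‖i (r q.1)‖)) :=
              mul_le_mul_of_nonneg_left hγb (abs_nonneg _)
            have hLq : Lγ (q.1, q.2) = Lγ q := rfl
            have hMax : 1 + ‖i (r q.1)‖ ≤ 1 + max M 0 := by
              have := le_max_left M 0; linarith
            nlinarith [abs_nonneg (g q - 1), norm_nonneg (i (r q.1)),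
              mul_nonneg (abs_nonneg (g q - 1)) hLnn]
        _ = ENNReal.ofReal (1 + max M 0) *
              ∫⁻ q, ENNReal.ofReal (|g q - 1| * Lγ q) ∂(nuT T ν) := by
            have hnn : (0:ℝ) ≤ 1 + max M 0 := by positivity
            simp_rw [fun q => ENNReal.ofReal_mul (p := 1 + max M 0)
              (q := |g q - 1| * Lγ q) hnn]
            rw [lintegral_const_mul' _ _ ENNReal.ofReal_ne_top]
        _ < ∞ := ENNReal.mul_lt_top ENNReal.ofReal_lt_top hK
    exact (show Integrable G (μT.prod ν) from hGint).integral_prod_left
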